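/- arXiv:1203.2464 — 3 statements merged into one kernel-verified Lean document; each statement's English description precedes it below -/
import Mathlib

section
/- ∫₀^{π/2} E(sinφ) sin²φ dφ = (π²/8) · ₃F₂(-1/2, 1/2, 3/2; 1, 2; 1), where E is the complete elliptic integral of the second kind and ₃F₂ is the generalized hypergeometric function evaluated at 1. -/
open Real

/-- The complete elliptic integral of the second kind. -/
noncomputable def ellipticE (ξ : ℝ) : ℝ :=
  ∫ θ in (0:ℝ)..(π/2), Real.sqrt (1 - ξ ^ 2 * Real.sin θ ^ 2)

/-- The generalized hypergeometric function ₃F₂ evaluated at z, as a sum of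
Pochhammer-symbol terms. -/
noncomputable def hyp3F2 (a₁ a₂ a₃ b₁ b₂ z : ℝ) : ℝ :=
  ∑' k : ℕ, ((ascPochhammer ℝ k).eval a₁ * (ascPochhammer ℝ k).eval a₂ *
      (ascPochhammer ℝ k).eval a₃) /
    ((ascPochhammer ℝ k).eval b₁ * (ascPochhammer ℝ k).eval b₂) * z ^ k / (Nat.factorial k)

noncomputable def aa : ℕ → ℝ
  | 0 => 1
  | (k+1) => -(catalan k : ℝ) / (2 * 4 ^ k)

lemma aa_zero : aa 0 = 1 := rfl

lemma aa_succ (k : ℕ) : aa (k+1) = -(catalan k : ℝ) / (2 * 4 ^ k) := rfl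

lemma catalan_real_succ (k : ℕ) :
    (catalan (k+1) : ℝ) = (catalan k : ℝ) * (2 * (2*k+1)) / (k+2) := by
  have h1 : ((k+1+1) * catalan (k+1) : ℝ) = ((k+1).centralBinom : ℝ) := by
    exact_mod_cast congrArg (Nat.cast : ℕ → ℝ) (succ_mul_catalan_eq_centralBinom (k+1))
  have h2 : ((k+1) * catalan k : ℝ) = (k.centralBinom : ℝ) := by
    exact_mod_cast congrArg (Nat.cast : ℕ → ℝ) (succ_mul_catalan_eq_centralBinom k)
  have h3 : ((k+1) * (k+1).centralBinom : ℝ) = 2 * (2*k+1) * (k.centralBinom : ℝ) := by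
    exact_mod_cast congrArg (Nat.cast : ℕ → ℝ) (Nat.succ_mul_centralBinom_succ k)
  have hk : (k:ℝ) + 1 ≠ 0 := by positivity
  have hk2 : (k:ℝ) + 2 ≠ 0 := by positivity
  field_simp
  nlinarith [h1, h2, h3]

lemma aa_rec (k : ℕ) : aa (k+1) = aa k * ((2*k - 1) / (2*k + 2)) := by
  cases k with
  | zero => norm_num [aa]
  | succ k =>
    rw [aa_succ, aa_succ, catalan_real_succ]
    have h4 : (4:ℝ) ^ (k+1) = 4 * 4 ^ k := by ring
    have hk2 : (k:ℝ) + 2 ≠ 0 := by positivity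
    have h4k : (4:ℝ) ^ k ≠ 0 := by positivity
    push_cast
    field_simp
    ring

lemma abs_aa_le_one (k : ℕ) : |aa k| ≤ 1 := by
  induction k with
  | zero => simp [aa]
  | succ k ih =>
    rw [aa_rec, abs_mul, abs_div]
    have h1 : |(2*(k:ℝ) - 1)| ≤ 2*k + 2 := by
      rw [abs_le]; constructor <;> [linarith [Nat.cast_nonneg (α := ℝ) k]; linarith [Nat.cast_nonneg (α := ℝ) k]]
    have h2 : |(2*(k:ℝ) + 2)| = 2*k + 2 := abs_of_pos (by positivity)
    have h3 : |(2*(k:ℝ) - 1)| / |(2*(k:ℝ) + 2)| ≤ 1 := by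
      rw [h2, div_le_one (by positivity)]; exact h1
    exact mul_le_one₀ ih (by positivity) h3

lemma aa_succ_nonpos (k : ℕ) : aa (k+1) ≤ 0 := by
  rw [aa_succ, div_nonpos_iff]
  right
  exact ⟨by simp, by positivity⟩
lemma summable_aa_norm_mul {x : ℝ} (h0 : 0 ≤ x) (h1 : x < 1) :
    Summable fun k => |aa k * x ^ k| := by
  apply Summable.of_nonneg_of_le (fun k => abs_nonneg _) (fun k => ?_)
    (summable_geometric_of_lt_one h0 h1)
  rw [abs_mul, abs_pow, abs_of_nonneg h0]
  calc |aa k| * x ^ k ≤ 1 * x ^ k :=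
        mul_le_mul_of_nonneg_right (abs_aa_le_one k) (pow_nonneg h0 k)
    _ = x ^ k := one_mul _

lemma summable_aa_mul {x : ℝ} (h0 : 0 ≤ x) (h1 : x < 1) :
    Summable fun k => aa k * x ^ k :=
  (summable_aa_norm_mul h0 h1).of_abs

lemma aa_conv_two_add (n : ℕ) :
    ∑ kl ∈ Finset.HasAntidiagonal.antidiagonal (n+2), aa kl.1 * aa kl.2 = 0 := by
  rw [Finset.Nat.sum_antidiagonal_eq_sum_range_succ_mk]
  rw [Finset.sum_range_succ', Finset.sum_range_succ]
  have hmid : ∑ i ∈ Finset.range (n+1), aa (i+1) * aa (n+2-(i+1))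
      = (catalan (n+1) : ℝ) / (4 * 4 ^ n) := by
    have hterm : ∀ i ∈ Finset.range (n+1), aa (i+1) * aa (n+2-(i+1))
        = ((catalan i : ℝ) * (catalan (n-i) : ℝ)) / (4 * 4 ^ n) := by
      intro i hi
      rw [Finset.mem_range] at hi
      have h1 : n + 2 - (i+1) = (n - i) + 1 := by omega
      rw [h1, aa_succ, aa_succ, div_mul_div_comm, neg_mul_neg]
      congr 1
      have hpow : (4:ℝ)^i * 4^(n-i) = 4^n := by
        rw [← pow_add]; congr 1; omega
      calc (2*(4:ℝ)^i) * (2*4^(n-i)) = 4*((4:ℝ)^i * 4^(n-i)) := by ring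
        _ = 4*4^n := by rw [hpow]
    rw [Finset.sum_congr rfl hterm, ← Finset.sum_div]
    congr 1
    have := catalan_succ' n
    have h2 : catalan (n+1) = ∑ i ∈ Finset.range (n+1), catalan i * catalan (n-i) := by
      rw [catalan_succ', Finset.Nat.sum_antidiagonal_eq_sum_range_succ_mk]
    rw [h2]
    push_cast
    rfl
  rw [hmid]
  have e0 : n + 2 - 0 = n + 2 := rfl
  have e2 : n + 2 - (n + 1 + 1) = 0 := by omega
  rw [e0, e2, aa_succ]
  simp only [aa_zero]
  have h4 : (4:ℝ) ^ (n+1) = 4 * 4 ^ n := by ring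
  rw [h4]
  have hp : (4:ℝ) ^ n ≠ 0 := by positivity
  field_simp
  ring

noncomputable def SS (x : ℝ) : ℝ := ∑' k, aa k * x ^ k

lemma sq_SS {x : ℝ} (h0 : 0 ≤ x) (h1 : x < 1) : SS x ^ 2 = 1 - x := by
  have hs : Summable fun k => ‖aa k * x ^ k‖ := by
    simpa only [Real.norm_eq_abs] using summable_aa_norm_mul h0 h1
  rw [SS, sq, tsum_mul_tsum_eq_tsum_sum_antidiagonal_of_summable_norm hs hs]
  have hterm : ∀ n, (∑ kl ∈ Finset.HasAntidiagonal.antidiagonal n, (aa kl.1 * x ^ kl.1) * (aa kl.2 * x ^ kl.2))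
      = (∑ kl ∈ Finset.HasAntidiagonal.antidiagonal n, aa kl.1 * aa kl.2) * x ^ n := by
    intro n
    rw [Finset.sum_mul]
    apply Finset.sum_congr rfl
    intro kl hkl
    have h := Finset.HasAntidiagonal.mem_antidiagonal.1 hkl
    rw [← h, pow_add]; ring
  rw [tsum_congr hterm]
  have hoff : ∀ n ∉ ({0, 1} : Finset ℕ),
      (∑ kl ∈ Finset.HasAntidiagonal.antidiagonal n, aa kl.1 * aa kl.2) * x ^ n = 0 := by
    intro n hn
    match n, hn with
    | 0, hn => exact absurd (by norm_num) hn
    | 1, hn => exact absurd (by norm_num) hn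
    | (m+2), hn => rw [aa_conv_two_add]; ring
  rw [tsum_eq_sum hoff]
  rw [Finset.sum_insert (by norm_num), Finset.sum_singleton]
  have h0' : (∑ kl ∈ Finset.HasAntidiagonal.antidiagonal 0, aa kl.1 * aa kl.2) = 1 := by
    simp [aa_zero]
  have h1' : (∑ kl ∈ Finset.HasAntidiagonal.antidiagonal 1, aa kl.1 * aa kl.2) = -1 := by
    rw [Finset.Nat.sum_antidiagonal_eq_sum_range_succ_mk]
    norm_num [Finset.sum_range_succ, aa_zero, aa_succ]
  rw [h0', h1']
  ring

lemma SS_tail (x : ℝ) (h0 : 0 ≤ x) (h1 : x < 1) :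
    SS x = 1 + ∑' k, aa (k+1) * x ^ (k+1) := by
  rw [SS, Summable.tsum_eq_zero_add (summable_aa_mul h0 h1)]
  simp [aa_zero]

set_option maxHeartbeats 1000000 in
lemma SS_antitone {x y : ℝ} (h0 : 0 ≤ x) (hxy : x ≤ y) (h1 : y < 1) : SS y ≤ SS x := by
  have hx1 : x < 1 := lt_of_le_of_lt hxy h1
  have hy0 : 0 ≤ y := h0.trans hxy
  have hsx : Summable (fun n : ℕ => aa (n+1) * x ^ (n+1)) :=
    (summable_nat_add_iff 1).2 (summable_aa_mul h0 hx1)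
  have hsy : Summable (fun n : ℕ => aa (n+1) * y ^ (n+1)) :=
    (summable_nat_add_iff 1).2 (summable_aa_mul hy0 h1)
  have hterm : ∀ k : ℕ, aa (k+1) * y ^ (k+1) ≤ aa (k+1) * x ^ (k+1) := fun k =>
    mul_le_mul_of_nonpos_left (pow_le_pow_left₀ h0 hxy (k+1)) (aa_succ_nonpos k)
  have h := Summable.tsum_le_tsum hterm hsy hsx
  rw [SS_tail x h0 hx1, SS_tail y hy0 h1]
  linarith

lemma SS_nonneg {x : ℝ} (h0 : 0 ≤ x) (h1 : x < 1) : 0 ≤ SS x := by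
  by_contra hneg
  push_neg at hneg
  set y := (x + 1) / 2 with hy
  have hxy : x < y := by rw [hy]; linarith
  have hy1 : y < 1 := by rw [hy]; linarith
  have hy0 : 0 ≤ y := by rw [hy]; linarith
  have hSy : SS y ≤ SS x := SS_antitone h0 hxy.le hy1
  have hSyneg : SS y < 0 := lt_of_le_of_lt hSy hneg
  have hx' : Real.sqrt (1 - x) = -SS x := by
    rw [← sq_SS h0 h1, Real.sqrt_sq_eq_abs, abs_of_neg hneg]
  have hy' : Real.sqrt (1 - y) = -SS y := by
    rw [← sq_SS hy0 hy1, Real.sqrt_sq_eq_abs, abs_of_neg hSyneg]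
  have : Real.sqrt (1 - y) < Real.sqrt (1 - x) :=
    Real.sqrt_lt_sqrt (by linarith) (by linarith)
  rw [hx', hy'] at this
  linarith

lemma sqrt_one_sub_eq {x : ℝ} (h0 : 0 ≤ x) (h1 : x < 1) :
    Real.sqrt (1 - x) = ∑' k, aa k * x ^ k := by
  have : Real.sqrt (1 - x) = Real.sqrt (SS x ^ 2) := by rw [sq_SS h0 h1]
  rw [this, Real.sqrt_sq (SS_nonneg h0 h1)]
  rfl

lemma summable_abs_aa : Summable fun k => |aa k| := by
  rw [← summable_nat_add_iff 1]
  apply summable_of_sum_range_le (c := 1) (fun n => abs_nonneg _)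
  intro N
  have key : ∀ x : ℝ, 0 ≤ x → x < 1 →
      ∑ k ∈ Finset.range N, |aa (k+1)| * x ^ (k+1) ≤ 1 := by
    intro x h0 h1
    have hsum : Summable fun k => |aa (k+1) * x ^ (k+1)| :=
      (summable_nat_add_iff 1).2 (summable_aa_norm_mul h0 h1)
    have step1 : ∑ k ∈ Finset.range N, |aa (k+1)| * x ^ (k+1)
        ≤ ∑' k, |aa (k+1) * x ^ (k+1)| := by
      have := Summable.sum_le_tsum (Finset.range N) (fun k _ => abs_nonneg (aa (k+1) * x ^ (k+1))) hsum
      calc ∑ k ∈ Finset.range N, |aa (k+1)| * x ^ (k+1)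
          = ∑ k ∈ Finset.range N, |aa (k+1) * x ^ (k+1)| := by
            apply Finset.sum_congr rfl; intro k _
            rw [abs_mul, abs_pow, abs_of_nonneg h0]
        _ ≤ _ := this
    have step2 : ∑' k, |aa (k+1) * x ^ (k+1)| = 1 - SS x := by
      have habs : ∀ k, |aa (k+1) * x ^ (k+1)| = -(aa (k+1) * x ^ (k+1)) := by
        intro k
        rw [abs_of_nonpos (mul_nonpos_of_nonpos_of_nonneg (aa_succ_nonpos k) (pow_nonneg h0 _))]
      rw [tsum_congr habs, tsum_neg]
      have := SS_tail x h0 h1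
      linarith [this]
    have step3 : (0:ℝ) ≤ SS x := SS_nonneg h0 h1
    linarith
  have hlim : Filter.Tendsto
      (fun j : ℕ => ∑ k ∈ Finset.range N, |aa (k+1)| * (1 - ((j:ℝ)+1)⁻¹) ^ (k+1))
      Filter.atTop (nhds (∑ k ∈ Finset.range N, |aa (k+1)|)) := by
    have hbase : Filter.Tendsto (fun j : ℕ => 1 - ((j:ℝ)+1)⁻¹) Filter.atTop (nhds 1) := by
      have := tendsto_one_div_add_atTop_nhds_zero_nat (𝕜 := ℝ)
      have h2 : Filter.Tendsto (fun j : ℕ => ((j:ℝ)+1)⁻¹) Filter.atTop (nhds 0) := by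
        simpa [one_div] using this
      simpa using Filter.Tendsto.const_sub (1:ℝ) h2
    have : Filter.Tendsto (fun j : ℕ => ∑ k ∈ Finset.range N, |aa (k+1)| * (1 - ((j:ℝ)+1)⁻¹) ^ (k+1))
        Filter.atTop (nhds (∑ k ∈ Finset.range N, |aa (k+1)| * 1 ^ (k+1))) := by
      apply tendsto_finset_sum
      intro k _
      exact (hbase.pow (k+1)).const_mul _
    simpa using this
  apply le_of_tendsto hlim
  apply Filter.Eventually.of_forall
  intro j
  apply key
  · have : ((j:ℝ)+1)⁻¹ ≤ 1 := by
      rw [inv_le_one_iff₀]; right; linarith [Nat.cast_nonneg (α := ℝ) j]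
    linarith
  · have : (0:ℝ) < ((j:ℝ)+1)⁻¹ := by positivity
    linarith

noncomputable def w : ℕ → ℝ := fun k => ∫ θ in (0:ℝ)..(π/2), Real.sin θ ^ (2*k)

lemma w_zero : w 0 = π / 2 := by
  simp [w]

lemma w_succ (k : ℕ) : w (k+1) = (2*(k:ℝ)+1) / (2*(k:ℝ)+2) * w k := by
  have h : 2*(k+1) = 2*k + 2 := by ring
  rw [w, w, h, integral_sin_pow (2*k)]
  rw [Real.sin_zero, Real.cos_pi_div_two]
  rw [zero_pow (by omega : 2*k+1 ≠ 0)]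
  push_cast
  ring

lemma w_pos (k : ℕ) : 0 < w k := by
  induction k with
  | zero => rw [w_zero]; positivity
  | succ k ih =>
    rw [w_succ]
    have h : (0:ℝ) < (2*(k:ℝ)+1)/(2*(k:ℝ)+2) := by positivity
    exact mul_pos h ih

lemma w_le (k : ℕ) : w k ≤ π/2 := by
  induction k with
  | zero => rw [w_zero]
  | succ k ih =>
    rw [w_succ]
    have h1 : (2*(k:ℝ)+1)/(2*(k:ℝ)+2) ≤ 1 := by
      rw [div_le_one (by positivity)]; linarith
    calc (2*(k:ℝ)+1)/(2*(k:ℝ)+2) * w k ≤ 1 * w k :=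
          mul_le_mul_of_nonneg_right h1 (w_pos k).le
      _ = w k := one_mul _
      _ ≤ π/2 := ih

lemma asc_eval_one (k : ℕ) : (ascPochhammer ℝ k).eval (1:ℝ) = (Nat.factorial k : ℝ) := by
  induction k with
  | zero => simp
  | succ k ih =>
    rw [ascPochhammer_succ_eval, ih, Nat.factorial_succ]
    push_cast; ring

lemma asc_eval_two (k : ℕ) : (ascPochhammer ℝ k).eval (2:ℝ) = (Nat.factorial (k+1) : ℝ) := by
  induction k with
  | zero => simp
  | succ k ih =>
    rw [ascPochhammer_succ_eval, ih]
    have : (k+1+1) = (k+2) := rfl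
    rw [this, Nat.factorial_succ (k+1)]
    push_cast; ring

lemma asc_eval_prod (x : ℝ) (k : ℕ) :
    (ascPochhammer ℝ k).eval x = ∏ i ∈ Finset.range k, (x + i) := by
  induction k with
  | zero => simp
  | succ k ih => rw [ascPochhammer_succ_eval, ih, Finset.prod_range_succ]

lemma aa_prod (k : ℕ) : aa k = ∏ i ∈ Finset.range k, ((2*(i:ℝ) - 1) / (2*(i:ℝ) + 2)) := by
  induction k with
  | zero => simp [aa_zero]
  | succ k ih => rw [aa_rec, ih, Finset.prod_range_succ]

lemma w_prod (k : ℕ) : w k = π/2 * ∏ i ∈ Finset.range k, ((2*(i:ℝ) + 1) / (2*(i:ℝ) + 2)) := by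
  induction k with
  | zero => simp [w_zero]
  | succ k ih => rw [w_succ, ih, Finset.prod_range_succ]; ring

lemma w_succ_prod (k : ℕ) :
    w (k+1) = π/4 * ∏ i ∈ Finset.range k, ((2*(i:ℝ) + 3) / (2*(i:ℝ) + 4)) := by
  have hstep : ∀ i ∈ Finset.range k,
      (2*((i+1 : ℕ):ℝ) + 1) / (2*((i+1 : ℕ):ℝ) + 2) = (2*(i:ℝ) + 3) / (2*(i:ℝ) + 4) := by
    intro i _
    have hc : ((i+1 : ℕ):ℝ) = (i:ℝ) + 1 := by push_cast; ring
    rw [hc]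
    congr 1 <;> ring
  rw [w_prod (k+1), Finset.prod_range_succ', Finset.prod_congr rfl hstep]
  have h0 : (2*((0:ℕ):ℝ) + 1) / (2*((0:ℕ):ℝ) + 2) = 1/2 := by norm_num
  rw [h0]
  ring

lemma key_term (k : ℕ) : aa k * (w k * w (k+1)) = π^2/8 *
    (((ascPochhammer ℝ k).eval (-1/2 : ℝ) * (ascPochhammer ℝ k).eval (1/2 : ℝ) *
      (ascPochhammer ℝ k).eval (3/2 : ℝ)) /
     ((ascPochhammer ℝ k).eval (1:ℝ) * (ascPochhammer ℝ k).eval (2:ℝ)) * (1:ℝ)^k /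
     (Nat.factorial k)) := by
  have hfac : ((Nat.factorial k : ℕ) : ℝ) = ∏ i ∈ Finset.range k, ((i:ℝ) + 1) := by
    rw [← Finset.prod_range_add_one_eq_factorial]
    push_cast
    rfl
  rw [aa_prod, w_prod, w_succ_prod, asc_eval_prod, asc_eval_prod, asc_eval_prod,
    asc_eval_prod, asc_eval_prod, one_pow, hfac]
  have hL : (∏ i ∈ Finset.range k, ((2*(i:ℝ) - 1) / (2*(i:ℝ) + 2))) *
      ((π/2 * (∏ i ∈ Finset.range k, ((2*(i:ℝ) + 1) / (2*(i:ℝ) + 2)))) *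
        (π/4 * (∏ i ∈ Finset.range k, ((2*(i:ℝ) + 3) / (2*(i:ℝ) + 4)))))
      = π^2/8 * ∏ i ∈ Finset.range k,
          (((2*(i:ℝ) - 1) / (2*(i:ℝ) + 2)) * ((2*(i:ℝ) + 1) / (2*(i:ℝ) + 2)) *
            ((2*(i:ℝ) + 3) / (2*(i:ℝ) + 4))) := by
    rw [Finset.prod_mul_distrib, Finset.prod_mul_distrib]
    ring
  rw [hL, mul_one]
  congr 1
  have hR : (∏ i ∈ Finset.range k,
      (((-1/2 : ℝ) + i) * ((1/2 : ℝ) + i) * ((3/2 : ℝ) + i) /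
        (((1:ℝ) + i) * ((2:ℝ) + i)) / ((i:ℝ) + 1)))
      = (∏ i ∈ Finset.range k, ((-1/2 : ℝ) + i)) * (∏ i ∈ Finset.range k, ((1/2 : ℝ) + i)) *
          (∏ i ∈ Finset.range k, ((3/2 : ℝ) + i)) /
        ((∏ i ∈ Finset.range k, ((1:ℝ) + i)) * (∏ i ∈ Finset.range k, ((2:ℝ) + i))) /
        (∏ i ∈ Finset.range k, ((i:ℝ) + 1)) := by
    rw [Finset.prod_div_distrib, Finset.prod_div_distrib, Finset.prod_mul_distrib,
      Finset.prod_mul_distrib, Finset.prod_mul_distrib]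
  rw [← hR]
  apply Finset.prod_congr rfl
  intro i _
  have h1 : ((i:ℝ) + 1) ≠ 0 := by positivity
  have h2 : ((i:ℝ) + 2) ≠ 0 := by positivity
  have h3 : (2*(i:ℝ) + 2) ≠ 0 := by positivity
  have h4 : (2*(i:ℝ) + 4) ≠ 0 := by positivity
  field_simp
  ring

lemma w_Ioo (k : ℕ) : ∫ θ in Set.Ioo (0:ℝ) (π/2), Real.sin θ ^ (2*k) = w k := by
  rw [w, intervalIntegral.integral_of_le (by positivity : (0:ℝ) ≤ π/2),
    MeasureTheory.integral_Ioc_eq_integral_Ioo]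

lemma integrableOn_Ioo_of_continuous {f : ℝ → ℝ} (hf : Continuous f) :
    MeasureTheory.IntegrableOn f (Set.Ioo (0:ℝ) (π/2)) :=
  (hf.integrableOn_Icc).mono_set Set.Ioo_subset_Icc_self

lemma sin_sq_le_one' (x : ℝ) : Real.sin x ^ 2 ≤ 1 := by
  nlinarith [Real.sin_le_one x, Real.neg_one_le_sin x]

lemma ellipticE_mul_sq (φ : ℝ) :
    ellipticE (Real.sin φ) * Real.sin φ ^ 2
      = ∑' k, (aa k * w k) * Real.sin φ ^ (2*k+2) := by
  have hE : ellipticE (Real.sin φ) = ∑' k, (aa k * Real.sin φ ^ (2*k)) * w k := by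
    rw [ellipticE, intervalIntegral.integral_of_le (by positivity : (0:ℝ) ≤ π/2),
      MeasureTheory.integral_Ioc_eq_integral_Ioo]
    have hcongr : Set.EqOn (fun θ => Real.sqrt (1 - Real.sin φ ^ 2 * Real.sin θ ^ 2))
        (fun θ => ∑' k, aa k * (Real.sin φ ^ 2 * Real.sin θ ^ 2) ^ k) (Set.Ioo 0 (π/2)) := by
      intro θ hθ
      have hpi : 0 < π := Real.pi_pos
      have hθ1 : Real.sin θ < 1 := by
        have h2 : θ < π/2 := hθ.2
        have hmem1 : θ ∈ Set.Icc (-(π/2)) (π/2) := by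
          constructor <;> [linarith [hθ.1]; linarith]
        have hmem2 : π/2 ∈ Set.Icc (-(π/2)) (π/2) := by
          constructor <;> linarith
        have := Real.strictMonoOn_sin hmem1 hmem2 h2
        rwa [Real.sin_pi_div_two] at this
      have hθ0 : 0 < Real.sin θ :=
        Real.sin_pos_of_pos_of_lt_pi hθ.1 (by linarith [hθ.2])
      have h0 : 0 ≤ Real.sin φ ^ 2 * Real.sin θ ^ 2 := by positivity
      have hlt : Real.sin φ ^ 2 * Real.sin θ ^ 2 < 1 := by
        have hsq : Real.sin θ ^ 2 < 1 := by nlinarith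
        have h1 : Real.sin φ ^ 2 * Real.sin θ ^ 2 ≤ Real.sin θ ^ 2 := by
          nlinarith [sin_sq_le_one' φ, sq_nonneg (Real.sin θ)]
        linarith
      simpa using sqrt_one_sub_eq h0 hlt
    rw [MeasureTheory.setIntegral_congr_fun measurableSet_Ioo hcongr]
    have hInt : ∀ k : ℕ, MeasureTheory.IntegrableOn
        (fun θ => aa k * (Real.sin φ ^ 2 * Real.sin θ ^ 2) ^ k) (Set.Ioo (0:ℝ) (π/2)) := by
      intro k
      apply integrableOn_Ioo_of_continuous
      continuity
    have hbnd : ∀ (k : ℕ) (θ : ℝ), ‖aa k * (Real.sin φ ^ 2 * Real.sin θ ^ 2) ^ k‖ ≤ |aa k| := by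
      intro k θ
      rw [Real.norm_eq_abs, abs_mul]
      have h01 : |(Real.sin φ ^ 2 * Real.sin θ ^ 2) ^ k| ≤ 1 := by
        rw [abs_pow]
        apply pow_le_one₀ (abs_nonneg _)
        rw [abs_of_nonneg (by positivity)]
        calc Real.sin φ ^ 2 * Real.sin θ ^ 2 ≤ 1 * 1 := by
              apply mul_le_mul (sin_sq_le_one' φ) (sin_sq_le_one' θ) (by positivity) (by norm_num)
          _ = 1 := one_mul 1
      calc |aa k| * |(Real.sin φ ^ 2 * Real.sin θ ^ 2) ^ k| ≤ |aa k| * 1 :=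
            mul_le_mul_of_nonneg_left h01 (abs_nonneg _)
        _ = |aa k| := mul_one _
    have hSum : Summable fun k : ℕ =>
        ∫ θ in Set.Ioo (0:ℝ) (π/2), ‖aa k * (Real.sin φ ^ 2 * Real.sin θ ^ 2) ^ k‖ := by
      apply Summable.of_nonneg_of_le
        (fun k => MeasureTheory.integral_nonneg (fun θ => norm_nonneg _))
        (fun k => ?_) (summable_abs_aa.mul_right (π/2))
      calc (∫ θ in Set.Ioo (0:ℝ) (π/2), ‖aa k * (Real.sin φ ^ 2 * Real.sin θ ^ 2) ^ k‖)
          ≤ ∫ _θ in Set.Ioo (0:ℝ) (π/2), |aa k| := by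
            apply MeasureTheory.setIntegral_mono_on ((hInt k).norm)
              (MeasureTheory.integrableOn_const (by
                rw [Real.volume_Ioo]; exact ENNReal.ofReal_ne_top))
              measurableSet_Ioo (fun θ _ => hbnd k θ)
        _ = |aa k| * (π/2) := by
            rw [MeasureTheory.setIntegral_const, MeasureTheory.measureReal_def, Real.volume_Ioo, smul_eq_mul,
              ENNReal.toReal_ofReal (by linarith [Real.pi_pos])]
            ring
    rw [← MeasureTheory.integral_tsum_of_summable_integral_norm hInt hSum]
    apply tsum_congr
    intro k
    have hsplit : ∀ θ : ℝ, aa k * (Real.sin φ ^ 2 * Real.sin θ ^ 2) ^ k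
        = (aa k * Real.sin φ ^ (2*k)) * Real.sin θ ^ (2*k) := by
      intro θ
      rw [mul_pow, ← pow_mul, ← pow_mul]
      ring
    rw [MeasureTheory.setIntegral_congr_fun measurableSet_Ioo (fun θ _ => hsplit θ),
      MeasureTheory.integral_const_mul, w_Ioo]
  rw [hE, ← tsum_mul_right]
  apply tsum_congr
  intro k
  rw [pow_add]
  ring

theorem stmt_2 :
    (∫ φ in (0:ℝ)..(π/2), ellipticE (Real.sin φ) * Real.sin φ ^ 2)
      = π ^ 2 / 8 * hyp3F2 (-1/2) (1/2) (3/2) 1 2 1 := by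
  have hmain : (∫ φ in (0:ℝ)..(π/2), ellipticE (Real.sin φ) * Real.sin φ ^ 2)
      = ∑' k, (aa k * w k) * w (k+1) := by
    rw [intervalIntegral.integral_congr (g := fun φ => ∑' k, (aa k * w k) * Real.sin φ ^ (2*k+2))
      (fun φ _ => ellipticE_mul_sq φ)]
    rw [intervalIntegral.integral_of_le (by positivity : (0:ℝ) ≤ π/2),
      MeasureTheory.integral_Ioc_eq_integral_Ioo]
    have hInt : ∀ k : ℕ, MeasureTheory.IntegrableOn
        (fun φ => (aa k * w k) * Real.sin φ ^ (2*k+2)) (Set.Ioo (0:ℝ) (π/2)) := by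
      intro k
      apply integrableOn_Ioo_of_continuous
      continuity
    have hbnd : ∀ (k : ℕ) (φ : ℝ), ‖(aa k * w k) * Real.sin φ ^ (2*k+2)‖
        ≤ |aa k| * (π/2) := by
      intro k φ
      rw [Real.norm_eq_abs, abs_mul, abs_mul]
      have h01 : |Real.sin φ ^ (2*k+2)| ≤ 1 := by
        rw [abs_pow]
        apply pow_le_one₀ (abs_nonneg _) (Real.abs_sin_le_one φ)
      have hw : |w k| ≤ π/2 := by
        rw [abs_of_pos (w_pos k)]; exact w_le k
      calc |aa k| * |w k| * |Real.sin φ ^ (2*k+2)| ≤ |aa k| * |w k| * 1 :=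
            mul_le_mul_of_nonneg_left h01 (by positivity)
        _ = |aa k| * |w k| := mul_one _
        _ ≤ |aa k| * (π/2) := mul_le_mul_of_nonneg_left hw (abs_nonneg _)
    have hSum : Summable fun k : ℕ =>
        ∫ φ in Set.Ioo (0:ℝ) (π/2), ‖(aa k * w k) * Real.sin φ ^ (2*k+2)‖ := by
      apply Summable.of_nonneg_of_le
        (fun k => MeasureTheory.integral_nonneg (fun φ => norm_nonneg _))
        (fun k => ?_) ((summable_abs_aa.mul_right (π/2)).mul_right (π/2))
      calc (∫ φ in Set.Ioo (0:ℝ) (π/2), ‖(aa k * w k) * Real.sin φ ^ (2*k+2)‖)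
          ≤ ∫ _φ in Set.Ioo (0:ℝ) (π/2), |aa k| * (π/2) := by
            apply MeasureTheory.setIntegral_mono_on
              ((hInt k).norm)
              (MeasureTheory.integrableOn_const (by
                rw [Real.volume_Ioo]; exact ENNReal.ofReal_ne_top))
              measurableSet_Ioo (fun φ _ => hbnd k φ)
        _ = |aa k| * (π/2) * (π/2) := by
            rw [MeasureTheory.setIntegral_const, MeasureTheory.measureReal_def, Real.volume_Ioo, smul_eq_mul,
              ENNReal.toReal_ofReal (by linarith [Real.pi_pos])]
            ring
    rw [← MeasureTheory.integral_tsum_of_summable_integral_norm hInt hSum]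
    apply tsum_congr
    intro k
    rw [MeasureTheory.integral_const_mul]
    congr 1
    have h2 : 2*k+2 = 2*(k+1) := by ring
    rw [h2, w_Ioo]
  rw [hmain]
  simp only [hyp3F2]
  rw [← tsum_mul_left]
  apply tsum_congr
  intro k
  rw [mul_assoc]
  exact key_term k
end

section
/- ∫₀^{π/2} ∫₀^{π/2} sinθ sinφ · √(1 - cos²θ sin²φ) · sinφ dθ dφ = 2/3. -/
open Real

lemma inner_int (φ : ℝ) (h1 : 0 ≤ φ) (h2 : φ ≤ π/2) :
    (∫ θ in (0:ℝ)..(π/2),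
      Real.sin θ * Real.sin φ * Real.sqrt (1 - Real.cos θ ^ 2 * Real.sin φ ^ 2) *
        Real.sin φ) = Real.sin φ ^ 2 * Real.cos φ / 2 + φ * Real.sin φ / 2 := by
  rcases eq_or_lt_of_le h1 with rfl | hpos
  · simp
  set s := Real.sin φ with hs
  have hs0 : 0 < s := Real.sin_pos_of_pos_of_lt_pi hpos (by linarith [pi_pos])
  have hs1 : s ≤ 1 := Real.sin_le_one φ
  set f : ℝ → ℝ := fun θ =>
    -(s^2 * (Real.cos θ * Real.sqrt (1 - Real.cos θ^2 * s^2)) + s * Real.arcsin (Real.cos θ * s)) / 2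
    with hf
  have hderiv : ∀ θ ∈ Set.Ioo (0:ℝ) (π/2), HasDerivAt f
      (Real.sin θ * s * Real.sqrt (1 - Real.cos θ ^ 2 * s ^ 2) * s) θ := by
    intro θ hθ
    have hc0 : 0 < Real.cos θ := Real.cos_pos_of_mem_Ioo ⟨by linarith [hθ.1, pi_pos], hθ.2⟩
    have hc1 : Real.cos θ < 1 := by
      have := Real.cos_lt_cos_of_nonneg_of_le_pi (le_refl 0) (by linarith [pi_pos, hθ.2]) hθ.1
      simpa using this
    have hc2 : Real.cos θ^2 < 1 := by nlinarith
    have hs2 : s^2 ≤ 1 := by nlinarith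
    have hA : 0 < 1 - Real.cos θ^2 * s^2 := by
      have := mul_le_of_le_one_right (sq_nonneg (Real.cos θ)) hs2
      linarith
    have hcs1 : Real.cos θ * s < 1 := by nlinarith
    have hcsm : -1 < Real.cos θ * s := by linarith [mul_pos hc0 hs0]
    have d1 : HasDerivAt (fun θ => 1 - Real.cos θ^2 * s^2)
        (2 * Real.sin θ * Real.cos θ * s^2) θ := by
      have h := (((Real.hasDerivAt_cos θ).fun_pow 2).mul_const (s^2)).const_sub 1
      convert h using 1 <;> first | rfl | (push_cast; ring)
    have dsq : HasDerivAt (fun θ => Real.sqrt (1 - Real.cos θ^2 * s^2))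
        ((1 / (2 * Real.sqrt (1 - Real.cos θ^2 * s^2))) * (2 * Real.sin θ * Real.cos θ * s^2)) θ :=
      (Real.hasDerivAt_sqrt hA.ne').comp θ d1
    have darc : HasDerivAt (fun θ => Real.arcsin (Real.cos θ * s))
        ((1 / Real.sqrt (1 - (Real.cos θ * s)^2)) * (-Real.sin θ * s)) θ :=
      HasDerivAt.comp θ (Real.hasDerivAt_arcsin hcsm.ne' hcs1.ne)
        ((Real.hasDerivAt_cos θ).mul_const s)
    have D : HasDerivAt f
        (-(s^2 * ((-Real.sin θ) * Real.sqrt (1 - Real.cos θ^2 * s^2) +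
          Real.cos θ * ((1 / (2 * Real.sqrt (1 - Real.cos θ^2 * s^2))) * (2 * Real.sin θ * Real.cos θ * s^2))) +
          s * ((1 / Real.sqrt (1 - (Real.cos θ * s)^2)) * (-Real.sin θ * s))) / 2) θ :=
      ((((Real.hasDerivAt_cos θ).mul dsq).const_mul (s^2)).add (darc.const_mul s)).neg.div_const 2
    convert D using 1
    have hrw : (Real.cos θ * s)^2 = Real.cos θ^2 * s^2 := by ring
    rw [hrw]
    have hsq : Real.sqrt (1 - Real.cos θ^2 * s^2) * Real.sqrt (1 - Real.cos θ^2 * s^2)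
        = 1 - Real.cos θ^2 * s^2 := Real.mul_self_sqrt (le_of_lt hA)
    have hne : Real.sqrt (1 - Real.cos θ^2 * s^2) ≠ 0 := by positivity
    set t := Real.sqrt (1 - Real.cos θ^2 * s^2)
    field_simp
    linear_combination (Real.sin θ) * hsq
  have hcont : ContinuousOn f (Set.Icc 0 (π/2)) := by
    apply Continuous.continuousOn
    apply Continuous.div_const
    apply Continuous.neg
    apply Continuous.add
    · fun_prop
    · exact continuous_const.mul (Real.continuous_arcsin.comp (Real.continuous_cos.mul continuous_const))
  have hint : IntervalIntegrable (fun θ => Real.sin θ * s * Real.sqrt (1 - Real.cos θ ^ 2 * s ^ 2) * s)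
      MeasureTheory.volume 0 (π/2) := by
    apply Continuous.intervalIntegrable
    fun_prop
  have key := intervalIntegral.integral_eq_sub_of_hasDerivAt_of_le
    (by positivity) hcont hderiv hint
  rw [key, hf]
  simp only [Real.cos_pi_div_two, Real.cos_zero]
  have h1s : Real.sqrt (1 - 1^2 * s^2) = Real.cos φ := by
    rw [show (1:ℝ) - 1^2*s^2 = Real.cos φ^2 by rw [hs]; nlinarith [Real.sin_sq_add_cos_sq φ]]
    exact Real.sqrt_sq (Real.cos_nonneg_of_mem_Icc ⟨by linarith, h2⟩)
  have harc : Real.arcsin (1 * s) = φ := by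
    rw [one_mul, hs, Real.arcsin_sin (by linarith) h2]
  rw [h1s, harc]
  simp
  ring

theorem stmt_4 :
    (∫ φ in (0:ℝ)..(π/2), ∫ θ in (0:ℝ)..(π/2),
      Real.sin θ * Real.sin φ * Real.sqrt (1 - Real.cos θ ^ 2 * Real.sin φ ^ 2) *
        Real.sin φ) = 2 / 3 := by
  have hpi : (0:ℝ) ≤ π/2 := by positivity
  rw [intervalIntegral.integral_congr (g := fun φ => Real.sin φ ^ 2 * Real.cos φ / 2 + φ * Real.sin φ / 2)
    (fun φ hφ => by
      rw [Set.uIcc_of_le hpi] at hφ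
      exact inner_int φ hφ.1 hφ.2)]
  have hderiv : ∀ x ∈ Set.uIcc (0:ℝ) (π/2),
      HasDerivAt (fun φ => Real.sin φ ^ 3 / 6 + (Real.sin φ - φ * Real.cos φ) / 2)
        (Real.sin x ^ 2 * Real.cos x / 2 + x * Real.sin x / 2) x := by
    intro x _
    have d1 : HasDerivAt (fun φ : ℝ => Real.sin φ ^ 3 / 6)
        (3 * Real.sin x ^ 2 * Real.cos x / 6) x := by
      have := ((Real.hasDerivAt_sin x).fun_pow 3).div_const 6
      convert this using 1 <;> rfl
    have d2 : HasDerivAt (fun φ : ℝ => (Real.sin φ - φ * Real.cos φ) / 2)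
        ((Real.cos x - (1 * Real.cos x + x * (-Real.sin x))) / 2) x :=
      ((Real.hasDerivAt_sin x).sub ((hasDerivAt_id x).mul (Real.hasDerivAt_cos x))).div_const 2
    have := d1.add d2
    convert this using 1 <;> first | rfl | ring
  have hint : IntervalIntegrable (fun φ => Real.sin φ ^ 2 * Real.cos φ / 2 + φ * Real.sin φ / 2)
      MeasureTheory.volume 0 (π/2) := by
    apply Continuous.intervalIntegrable; fun_prop
  rw [intervalIntegral.integral_eq_sub_of_hasDerivAt hderiv hint]
  simp
  norm_num
end

section
/- If (x,y,z) is uniformly distributed on the unit sphere in ℝ³, then E((|x|+|y|+|z|)²) = 1 + 4/π. -/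
open Real MeasureTheory Metric

/-- The uniform probability measure on the unit sphere in ℝ³. -/
noncomputable def sphereUniform :
    Measure (sphere (0 : EuclideanSpace ℝ (Fin 3)) 1) :=
  ((volume : Measure (EuclideanSpace ℝ (Fin 3))).toSphere Set.univ)⁻¹ •
    (volume : Measure (EuclideanSpace ℝ (Fin 3))).toSphere

section Aux
open Set

local notation "E3" => EuclideanSpace ℝ (Fin 3)


lemma gamma_three_half : Real.Gamma (3/2) = √π / 2 := by
  have h : (3/2 : ℝ) = 1/2 + 1 := by norm_num
  rw [h, Real.Gamma_add_one (by norm_num), Real.Gamma_one_half_eq]; ring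

lemma gamma_five_half : Real.Gamma (5/2) = 3 * √π / 4 := by
  have h : (5/2 : ℝ) = 3/2 + 1 := by norm_num
  rw [h, Real.Gamma_add_one (by norm_num), gamma_three_half]; ring

lemma I2 : ∫ r in Ioi (0:ℝ), r ^ 2 * exp (-r ^ 2) = √π / 4 := by
  have h := integral_rpow_mul_exp_neg_rpow (p := 2) (q := 2) (by norm_num) (by norm_num)
  rw [setIntegral_congr_fun measurableSet_Ioi (fun x hx => ?_), h,
    show ((2:ℝ)+1)/2 = 3/2 by norm_num, gamma_three_half]
  · ring
  · norm_cast

lemma I4 : ∫ r in Ioi (0:ℝ), r ^ 2 * (r ^ 2 * exp (-r ^ 2)) = 3 * √π / 8 := by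
  have h := integral_rpow_mul_exp_neg_rpow (p := 2) (q := 4) (by norm_num) (by norm_num)
  rw [setIntegral_congr_fun measurableSet_Ioi (fun x hx => ?_), h,
    show ((4:ℝ)+1)/2 = 5/2 by norm_num, gamma_five_half]
  · ring
  · rw [show x ^ (4:ℝ) = x ^ (4:ℕ) by norm_cast, show x ^ (2:ℝ) = x ^ (2:ℕ) by norm_cast]
    ring

lemma I1 : ∫ r in Ioi (0:ℝ), r * exp (-r ^ 2) = 1/2 := by
  have h := integral_rpow_mul_exp_neg_rpow (p := 2) (q := 1) (by norm_num) (by norm_num)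
  rw [setIntegral_congr_fun measurableSet_Ioi (fun x hx => ?_), h]
  · norm_num [Real.Gamma_one]
  · rw [Real.rpow_one]; norm_cast

lemma Ig : ∫ t : ℝ, exp (-t ^ 2) = √π := by
  simpa using integral_gaussian 1

lemma Ih : ∫ t : ℝ, |t| * exp (-t ^ 2) = 1 := by
  have : ∀ t : ℝ, |t| * exp (-t ^ 2) = |t| * exp (-|t| ^ 2) := by
    intro t; rw [sq_abs]
  rw [integral_congr_ae (Filter.Eventually.of_forall this),
    integral_comp_abs (f := fun s => s * exp (-s ^ 2)), I1]
  norm_num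

lemma Ik : ∫ t : ℝ, |t| ^ 2 * exp (-t ^ 2) = √π / 2 := by
  have : ∀ t : ℝ, |t| ^ 2 * exp (-t ^ 2) = |t| ^ 2 * exp (-|t| ^ 2) := by
    intro t; rw [sq_abs]
  rw [integral_congr_ae (Filter.Eventually.of_forall this),
    integral_comp_abs (f := fun s => s ^ 2 * exp (-s ^ 2)), I2]
  ring


lemma prod3 (a b c : ℝ → ℝ) :
    ∫ y : Fin 3 → ℝ, a (y 0) * b (y 1) * c (y 2) =
      (∫ t, a t) * (∫ t, b t) * (∫ t, c t) := by
  have h := integral_fintype_prod_eq_prod (𝕜 := ℝ) (ι := Fin 3) (E := fun _ => ℝ) ![a, b, c]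
    (μ := fun _ => volume)
  simp only [Fin.prod_univ_three] at h
  simpa [volume_pi] using h

lemma int3 {a b c : ℝ → ℝ} (ha : Integrable a) (hb : Integrable b) (hc : Integrable c) :
    Integrable (fun y : Fin 3 → ℝ => a (y 0) * b (y 1) * c (y 2)) := by
  have h := Integrable.fintype_prod (𝕜 := ℝ) (f := ![a, b, c]) (μ := fun _ => volume) (by
    intro i; fin_cases i <;> simpa)
  simp only [Fin.prod_univ_three] at h
  simpa [volume_pi] using h

lemma int_g : Integrable (fun t : ℝ => exp (-t ^ 2)) := by
  simpa using integrable_exp_neg_mul_sq (b := 1) one_pos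

lemma int_h : Integrable (fun t : ℝ => |t| * exp (-t ^ 2)) := by
  have h := integrable_rpow_mul_exp_neg_mul_sq (b := 1) one_pos (s := 1) (by norm_num)
  have h2 : Integrable (fun t : ℝ => t * exp (-t ^ 2)) := by
    simpa [Real.rpow_one] using h
  have := h2.abs
  refine this.congr (Filter.Eventually.of_forall fun t => ?_)
  show |t * rexp (-t ^ 2)| = |t| * rexp (-t ^ 2)
  rw [abs_mul, abs_of_pos (exp_pos _)]

lemma int_k : Integrable (fun t : ℝ => |t| ^ 2 * exp (-t ^ 2)) := by
  have h := integrable_rpow_mul_exp_neg_mul_sq (b := 1) one_pos (s := 2) (by norm_num)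
  have h2 : Integrable (fun t : ℝ => t ^ 2 * exp (-t ^ 2)) := by
    have : ∀ t : ℝ, t ^ (2:ℝ) * exp (-1 * t ^ 2) = t ^ 2 * exp (-t ^ 2) := fun t => by
      rw [show t ^ (2:ℝ) = t ^ (2:ℕ) by norm_cast]; norm_num
    simpa [this] using h
  refine h2.congr (Filter.Eventually.of_forall fun t => ?_)
  show t ^ 2 * rexp (-t ^ 2) = |t| ^ 2 * rexp (-t ^ 2)
  rw [sq_abs]

lemma transfer (f : sphere (0 : E3) 1 → ℝ) (w : ℝ → ℝ) (F : E3 → ℝ)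
    (hF : ∀ x : ({0}ᶜ : Set E3),
      F x = f ((homeomorphUnitSphereProd E3 x).1) * w ((homeomorphUnitSphereProd E3 x).2 : ℝ)) :
    ∫ x, F x = (∫ u, f u ∂((volume : Measure E3).toSphere)) *
      ∫ r in Ioi (0:ℝ), r ^ 2 * w r := by
  have hdim : Module.finrank ℝ E3 - 1 = 2 := by
    rw [finrank_euclideanSpace_fin]
  have mp := (volume : Measure E3).measurePreserving_homeomorphUnitSphereProd
  rw [hdim] at mp
  calc ∫ x, F x ∂(volume : Measure E3)
      = ∫ x : ({0}ᶜ : Set E3), F x ∂((volume : Measure E3).comap Subtype.val) := by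
        rw [MeasureTheory.integral_subtype_comap (measurableSet_singleton 0).compl,
          MeasureTheory.restrict_compl_singleton]
    _ = ∫ p : sphere (0:E3) 1 × Ioi (0:ℝ), f p.1 * w p.2
          ∂((volume : Measure E3).toSphere.prod (Measure.volumeIoiPow 2)) := by
        rw [← mp.integral_comp (Homeomorph.measurableEmbedding _)
          (fun p : sphere (0:E3) 1 × Ioi (0:ℝ) => f p.1 * w p.2)]
        exact integral_congr_ae (Filter.Eventually.of_forall fun x => hF x)
    _ = (∫ u, f u ∂((volume : Measure E3).toSphere)) *
          ∫ r : Ioi (0:ℝ), w r ∂(Measure.volumeIoiPow 2) :=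
        integral_prod_mul f (fun r : Ioi (0:ℝ) => w r)
    _ = (∫ u, f u ∂((volume : Measure E3).toSphere)) * ∫ r in Ioi (0:ℝ), r ^ 2 * w r := by
        congr 1
        simp only [Measure.volumeIoiPow, ENNReal.ofReal]
        rw [integral_withDensity_eq_integral_smul
          ((measurable_subtype_coe.pow_const 2).real_toNNReal)
          (fun r : Ioi (0:ℝ) => w r),
          MeasureTheory.integral_subtype_comap measurableSet_Ioi (f := fun a : ℝ => (a ^ 2).toNNReal • w a)]
        refine setIntegral_congr_fun measurableSet_Ioi fun x hx => ?_
        rw [NNReal.smul_def, Real.coe_toNNReal _ (pow_nonneg hx.out.le _), smul_eq_mul]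

lemma J_pi : ∫ y : Fin 3 → ℝ,
    (|y 0| + |y 1| + |y 2|) ^ 2 * (exp (-(y 0) ^ 2) * exp (-(y 1) ^ 2) * exp (-(y 2) ^ 2))
    = 3 / 2 * π * √π + 6 * √π := by
  have i1 : Integrable (fun y : Fin 3 → ℝ => |y 0| ^ 2 * exp (-(y 0) ^ 2) * exp (-(y 1) ^ 2) * exp (-(y 2) ^ 2)) := int3 int_k int_g int_g
  have i2 : Integrable (fun y : Fin 3 → ℝ => exp (-(y 0) ^ 2) * (|y 1| ^ 2 * exp (-(y 1) ^ 2)) * exp (-(y 2) ^ 2)) := int3 int_g int_k int_g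
  have i3 : Integrable (fun y : Fin 3 → ℝ => exp (-(y 0) ^ 2) * exp (-(y 1) ^ 2) * (|y 2| ^ 2 * exp (-(y 2) ^ 2))) := int3 int_g int_g int_k
  have i4 : Integrable (fun y : Fin 3 → ℝ => 2 * (|y 0| * exp (-(y 0) ^ 2) * (|y 1| * exp (-(y 1) ^ 2)) * exp (-(y 2) ^ 2))) := (int3 int_h int_h int_g).const_mul 2
  have i5 : Integrable (fun y : Fin 3 → ℝ => 2 * (|y 0| * exp (-(y 0) ^ 2) * exp (-(y 1) ^ 2) * (|y 2| * exp (-(y 2) ^ 2)))) := (int3 int_h int_g int_h).const_mul 2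
  have i6 : Integrable (fun y : Fin 3 → ℝ => 2 * (exp (-(y 0) ^ 2) * (|y 1| * exp (-(y 1) ^ 2)) * (|y 2| * exp (-(y 2) ^ 2)))) := (int3 int_g int_h int_h).const_mul 2
  have i12 : Integrable (fun y : Fin 3 → ℝ => |y 0| ^ 2 * exp (-(y 0) ^ 2) * exp (-(y 1) ^ 2) * exp (-(y 2) ^ 2) + exp (-(y 0) ^ 2) * (|y 1| ^ 2 * exp (-(y 1) ^ 2)) * exp (-(y 2) ^ 2)) := i1.add i2
  have i34 : Integrable (fun y : Fin 3 → ℝ => exp (-(y 0) ^ 2) * exp (-(y 1) ^ 2) * (|y 2| ^ 2 * exp (-(y 2) ^ 2)) + 2 * (|y 0| * exp (-(y 0) ^ 2) * (|y 1| * exp (-(y 1) ^ 2)) * exp (-(y 2) ^ 2))) := i3.add i4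
  have i56 : Integrable (fun y : Fin 3 → ℝ => 2 * (|y 0| * exp (-(y 0) ^ 2) * exp (-(y 1) ^ 2) * (|y 2| * exp (-(y 2) ^ 2))) + 2 * (exp (-(y 0) ^ 2) * (|y 1| * exp (-(y 1) ^ 2)) * (|y 2| * exp (-(y 2) ^ 2)))) := i5.add i6
  have i3456 : Integrable (fun y : Fin 3 → ℝ => (exp (-(y 0) ^ 2) * exp (-(y 1) ^ 2) * (|y 2| ^ 2 * exp (-(y 2) ^ 2)) + 2 * (|y 0| * exp (-(y 0) ^ 2) * (|y 1| * exp (-(y 1) ^ 2)) * exp (-(y 2) ^ 2))) + (2 * (|y 0| * exp (-(y 0) ^ 2) * exp (-(y 1) ^ 2) * (|y 2| * exp (-(y 2) ^ 2))) + 2 * (exp (-(y 0) ^ 2) * (|y 1| * exp (-(y 1) ^ 2)) * (|y 2| * exp (-(y 2) ^ 2))))) := i34.add i56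
  have hpt : ∀ y : Fin 3 → ℝ,
      (|y 0| + |y 1| + |y 2|) ^ 2 * (exp (-(y 0) ^ 2) * exp (-(y 1) ^ 2) * exp (-(y 2) ^ 2)) =
      (|y 0| ^ 2 * exp (-(y 0) ^ 2) * exp (-(y 1) ^ 2) * exp (-(y 2) ^ 2) + exp (-(y 0) ^ 2) * (|y 1| ^ 2 * exp (-(y 1) ^ 2)) * exp (-(y 2) ^ 2)) + ((exp (-(y 0) ^ 2) * exp (-(y 1) ^ 2) * (|y 2| ^ 2 * exp (-(y 2) ^ 2)) + 2 * (|y 0| * exp (-(y 0) ^ 2) * (|y 1| * exp (-(y 1) ^ 2)) * exp (-(y 2) ^ 2))) + (2 * (|y 0| * exp (-(y 0) ^ 2) * exp (-(y 1) ^ 2) * (|y 2| * exp (-(y 2) ^ 2))) + 2 * (exp (-(y 0) ^ 2) * (|y 1| * exp (-(y 1) ^ 2)) * (|y 2| * exp (-(y 2) ^ 2))))) := by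
    intro y; ring
  rw [integral_congr_ae (Filter.Eventually.of_forall hpt),
    integral_add i12 i3456, integral_add i1 i2,
    integral_add i34 i56, integral_add i3 i4, integral_add i5 i6,
    integral_const_mul, integral_const_mul, integral_const_mul,
    prod3 (fun t : ℝ => |t| ^ 2 * exp (-t ^ 2)) (fun t : ℝ => exp (-t ^ 2)) (fun t : ℝ => exp (-t ^ 2)), prod3 (fun t : ℝ => exp (-t ^ 2)) (fun t : ℝ => |t| ^ 2 * exp (-t ^ 2)) (fun t : ℝ => exp (-t ^ 2)), prod3 (fun t : ℝ => exp (-t ^ 2)) (fun t : ℝ => exp (-t ^ 2)) (fun t : ℝ => |t| ^ 2 * exp (-t ^ 2)), prod3 (fun t : ℝ => |t| * exp (-t ^ 2)) (fun t : ℝ => |t| * exp (-t ^ 2)) (fun t : ℝ => exp (-t ^ 2)), prod3 (fun t : ℝ => |t| * exp (-t ^ 2)) (fun t : ℝ => exp (-t ^ 2)) (fun t : ℝ => |t| * exp (-t ^ 2)), prod3 (fun t : ℝ => exp (-t ^ 2)) (fun t : ℝ => |t| * exp (-t ^ 2)) (fun t : ℝ => |t| * exp (-t ^ 2)), Ig,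 Ih, Ik]
  have hss : √π * √π = π := Real.mul_self_sqrt pi_pos.le
  linear_combination (3 / 2 * √π) * hss

lemma J_E : ∫ x : EuclideanSpace ℝ (Fin 3),
    (|x 0| + |x 1| + |x 2|) ^ 2 * exp (-‖x‖ ^ 2) = 3 / 2 * π * √π + 6 * √π := by
  have mp := (EuclideanSpace.volume_preserving_symm_measurableEquiv_toLp (Fin 3)).symm
  rw [← mp.integral_comp (MeasurableEquiv.measurableEmbedding _)
    (fun x : EuclideanSpace ℝ (Fin 3) => (|x 0| + |x 1| + |x 2|) ^ 2 * exp (-‖x‖ ^ 2))]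
  rw [← J_pi]
  refine integral_congr_ae (Filter.Eventually.of_forall fun y => ?_)
  have hcoord : ∀ i, ((MeasurableEquiv.toLp 2 (Fin 3 → ℝ)).symm.symm y) i = y i := fun i => rfl
  have hnorm : ‖(MeasurableEquiv.toLp 2 (Fin 3 → ℝ)).symm.symm y‖ ^ 2
      = (y 0) ^ 2 + (y 1) ^ 2 + (y 2) ^ 2 := by
    rw [EuclideanSpace.norm_eq, Real.sq_sqrt (by positivity)]
    simp [Fin.sum_univ_three, hcoord, sq_abs]
  show (|_| + |_| + |_|) ^ 2 * exp (-‖_‖ ^ 2) = _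
  rw [hnorm]
  simp only [hcoord]
  rw [show -((y 0) ^ 2 + (y 1) ^ 2 + (y 2) ^ 2) = (-(y 0)^2) + ((-(y 1)^2) + (-(y 2)^2)) by ring,
    Real.exp_add, Real.exp_add]
  ring

lemma hGauss : ∫ x : E3, exp (-‖x‖ ^ 2) = π * √π := by
  have h := GaussianFourier.integral_rexp_neg_mul_sq_norm (V := E3) one_pos
  rw [finrank_euclideanSpace_fin] at h
  simp only [neg_mul, one_mul, div_one] at h
  rw [h, show (((3:ℕ):ℝ)/2) = 1 + 1/2 by norm_num, Real.rpow_add pi_pos, Real.rpow_one,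
    ← Real.sqrt_eq_rpow]

lemma key1 : (∫ u : sphere (0 : E3) 1,
      (|(u : E3) 0| + |(u : E3) 1| + |(u : E3) 2|) ^ 2 ∂((volume : Measure E3).toSphere))
      * (3 * √π / 8) = 3 / 2 * π * √π + 6 * √π := by
  have h := transfer
    (fun u : sphere (0 : E3) 1 => (|(u : E3) 0| + |(u : E3) 1| + |(u : E3) 2|) ^ 2)
    (fun r => r ^ 2 * exp (-r ^ 2))
    (fun x : E3 => (|x 0| + |x 1| + |x 2|) ^ 2 * exp (-‖x‖ ^ 2)) ?_
  · rw [J_E, I4] at h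
    exact h.symm
  · intro x
    have hn : ‖(x : E3)‖ ≠ 0 := norm_ne_zero_iff.mpr x.2
    simp only [homeomorphUnitSphereProd_apply_fst_coe, homeomorphUnitSphereProd_apply_snd_coe,
      PiLp.smul_apply, smul_eq_mul, abs_mul, abs_inv, abs_norm]
    field_simp

lemma key2 : ((volume : Measure E3).toSphere univ).toReal * (√π / 4) = π * √π := by
  have h := transfer (fun _ => (1:ℝ)) (fun r => exp (-r ^ 2))
    (fun x : E3 => exp (-‖x‖ ^ 2)) (fun x => by simp)
  rw [hGauss, I2, integral_const, smul_eq_mul, mul_one] at h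
  exact h.symm


theorem stmt6aux :
    (∫ u : sphere (0 : EuclideanSpace ℝ (Fin 3)) 1,
        (|(u : EuclideanSpace ℝ (Fin 3)) 0| + |(u : EuclideanSpace ℝ (Fin 3)) 1| +
          |(u : EuclideanSpace ℝ (Fin 3)) 2|) ^ 2
        ∂(((volume : Measure (EuclideanSpace ℝ (Fin 3))).toSphere Set.univ)⁻¹ •
            (volume : Measure (EuclideanSpace ℝ (Fin 3))).toSphere)) = 1 + 4 / π := by
  have hsq : √π > 0 := Real.sqrt_pos.mpr pi_pos
  have hS : (∫ u : sphere (0 : E3) 1,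
      (|(u : E3) 0| + |(u : E3) 1| + |(u : E3) 2|) ^ 2 ∂((volume : Measure E3).toSphere))
      = 4 * π + 16 := by
    refine mul_right_cancel₀ (show (3 * √π / 8 : ℝ) ≠ 0 by positivity) ?_
    rw [key1]; nlinarith [Real.sq_sqrt pi_pos.le]
  have hT : ((volume : Measure E3).toSphere univ).toReal = 4 * π := by
    refine mul_right_cancel₀ (show (√π / 4 : ℝ) ≠ 0 by positivity) ?_
    rw [key2]; ring
  rw [integral_smul_measure, ENNReal.toReal_inv, hS, hT, smul_eq_mul]
  field_simp
  ring

end Aux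

theorem stmt_6 :
    (∫ u : sphere (0 : EuclideanSpace ℝ (Fin 3)) 1,
        (|(u : EuclideanSpace ℝ (Fin 3)) 0| + |(u : EuclideanSpace ℝ (Fin 3)) 1| +
          |(u : EuclideanSpace ℝ (Fin 3)) 2|) ^ 2 ∂sphereUniform) = 1 + 4 / π := by
  unfold sphereUniform
  exact stmt6aux
end
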